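/- Let q be a prime power and h, k integers with 2 ≤ h ≤ k. Let D = {(x_1,...,x_k) ∈ GF(q)^k \ {0} : x_1 ⋯ x_h (x_1 + ⋯ + x_h) = 0}. Then the cardinality of D equals q^{k-h-1}(q^{h+1} - (q-1)^{h+1} + (-1)^h (q-1)) - 1. -/

import Mathlib

open Finset

open scoped Classical in
noncomputable def Zc (F : Type) [Field F] [Fintype F] (n : ℕ) : ℕ :=
  Nat.card {y : Fin n → F // (∀ i, y i ≠ 0) ∧ ∑ i, y i = 0}

variable {F : Type} [Field F] [Fintype F]

lemma card_ne : Nat.card {x : F // x ≠ 0} = Fintype.card F - 1 := by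
  classical
  rw [Nat.card_eq_fintype_card, Fintype.card_subtype_compl (p := fun x : F => x = 0)]
  simp [Fintype.card_subtype_eq]

lemma Z_add_U (n : ℕ) :
    Zc F n + Nat.card {y : Fin n → F // (∀ i, y i ≠ 0) ∧ ∑ i, y i ≠ 0}
      = (Fintype.card F - 1) ^ n := by
  classical
  rw [Zc, Nat.card_eq_fintype_card, Nat.card_eq_fintype_card,
    Fintype.card_subtype, Fintype.card_subtype]
  have h1 := Finset.card_filter_add_card_filter_not
    (s := (univ : Finset (Fin n → F)).filter (fun y => ∀ i, y i ≠ 0))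
    (p := fun y => ∑ i, y i = 0)
  rw [filter_filter, filter_filter] at h1
  have h2 : ((univ : Finset (Fin n → F)).filter (fun y => ∀ i, y i ≠ 0)).card
      = (Fintype.card F - 1) ^ n := by
    rw [← Fintype.card_subtype]
    rw [Fintype.card_congr (Equiv.subtypePiEquivPi (p := fun _ : Fin n => fun x : F => x ≠ 0))]
    rw [Fintype.card_pi]
    simp [← Nat.card_eq_fintype_card, card_ne, Nat.card_eq_fintype_card, Fintype.card_fin]
  rw [← h2]
  convert h1 using 3

lemma Z_succ (n : ℕ) :
    Zc F (n + 1) = Nat.card {y : Fin n → F // (∀ i, y i ≠ 0) ∧ ∑ i, y i ≠ 0} := by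
  rw [Zc]
  refine Nat.card_congr ?_
  refine ⟨fun y => ⟨Fin.init y.1, fun i => y.2.1 _, ?_⟩,
    fun y => ⟨Fin.snoc y.1 (-(∑ i, y.1 i)), ⟨?_, ?_⟩⟩, ?_, ?_⟩
  · -- sum init ≠ 0
    obtain ⟨y, hy0, hy⟩ := y
    intro hsum
    have := hy
    rw [Fin.sum_univ_castSucc] at this
    have hlast : y (Fin.last n) = 0 := by
      have : (∑ i : Fin n, Fin.init y i) + y (Fin.last n) = 0 := this
      rw [hsum, zero_add] at this; exact this
    exact hy0 (Fin.last n) hlast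
  · -- all coords of snoc ≠ 0
    intro i
    refine Fin.lastCases ?_ ?_ i
    · rw [Fin.snoc_last]
      simpa using y.2.2
    · intro j
      rw [Fin.snoc_castSucc]
      exact y.2.1 j
  · -- sum snoc = 0
    rw [Fin.sum_univ_castSucc]
    simp
  · -- left inverse
    rintro ⟨y, hy0, hy⟩
    ext1
    simp only
    have hlast : -(∑ i : Fin n, Fin.init y i) = y (Fin.last n) := by
      rw [Fin.sum_univ_castSucc] at hy
      have : (∑ i : Fin n, Fin.init y i) + y (Fin.last n) = 0 := hy
      linear_combination -this
    rw [hlast, Fin.snoc_init_self]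
  · -- right inverse
    rintro ⟨y, hy⟩
    ext1
    simp [Fin.init_snoc]

lemma Z_formula (n : ℕ) (hn : 1 ≤ n) :
    (Zc F n : ℚ) = (((Fintype.card F : ℚ) - 1) ^ n + (-1) ^ n * ((Fintype.card F : ℚ) - 1))
      / (Fintype.card F : ℚ) := by
  have hq2 : 2 ≤ Fintype.card F := Fintype.one_lt_card
  have hq0 : (Fintype.card F : ℚ) ≠ 0 := by positivity
  have hcast : ((Fintype.card F - 1 : ℕ) : ℚ) = (Fintype.card F : ℚ) - 1 := by
    push_cast [Nat.cast_sub (by omega : 1 ≤ Fintype.card F)]; ring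
  induction n, hn using Nat.le_induction with
  | base =>
    have : Zc F 1 = 0 := by
      rw [Zc, Nat.card_eq_zero]
      left
      constructor
      rintro ⟨y, hy0, hy⟩
      exact hy0 0 (by simpa [Fin.sum_univ_one] using hy)
    rw [this]
    push_cast
    field_simp
    ring
  | succ n hn ih =>
    have hZU := Z_add_U (F := F) n
    rw [← Z_succ] at hZU
    have : (Zc F n : ℚ) + (Zc F (n+1) : ℚ) = ((Fintype.card F : ℚ) - 1) ^ n := by
      have h' := congrArg (fun m : ℕ => (m : ℚ)) hZU
      push_cast at h'
      rw [hcast] at h'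
      exact h'
    have hZ : (Zc F (n+1) : ℚ) = ((Fintype.card F : ℚ) - 1) ^ n - Zc F n := by
      linarith
    rw [hZ, ih]
    field_simp
    ring

lemma card_comp {h k : ℕ} (hk : h ≤ k) (Q : (Fin h → F) → Prop) :
    Nat.card {x : Fin k → F // Q (fun j => x (Fin.castLE hk j))}
      = Nat.card {y : Fin h → F // Q y} * Fintype.card F ^ (k - h) := by
  have hkh : h + (k - h) = k := Nat.add_sub_cancel' hk
  let e : (Fin k → F) ≃ (Fin h → F) × (Fin (k - h) → F) :=
    (Equiv.arrowCongr (finCongr hkh).symm (Equiv.refl F)).trans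
      ((Equiv.arrowCongr finSumFinEquiv.symm (Equiv.refl F)).trans
        (Equiv.sumArrowEquivProdArrow _ _ _))
  have key : ∀ x : Fin k → F, (e x).1 = fun j => x (Fin.castLE hk j) := by
    intro x
    funext j
    show x _ = x _
    congr 1
  have e2 : {x : Fin k → F // Q (fun j => x (Fin.castLE hk j))}
      ≃ {p : (Fin h → F) × (Fin (k - h) → F) // Q p.1} :=
    (Equiv.subtypeEquiv e (by intro x; rw [key x])).trans (Equiv.refl _)
  rw [Nat.card_congr e2, Nat.card_congr (Equiv.prodSubtypeFstEquivSubtypeProd (p := Q))]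
  rw [Nat.card_prod]
  congr 1
  simp [Nat.card_eq_fintype_card]

def Apred (F : Type) [Field F] {h k : ℕ} (hk : h ≤ k) (x : Fin k → F) : Prop :=
  (∏ j : Fin h, x (Fin.castLE hk j)) * (∑ j : Fin h, x (Fin.castLE hk j)) = 0

theorem stmt_2 {F : Type} [Field F] [Fintype F] [DecidableEq F]
    (q h k : ℕ) (hq : Fintype.card F = q) (hh : 2 ≤ h) (hk : h ≤ k) :
    (Set.ncard {x : Fin k → F | x ≠ 0 ∧
        (∏ i ∈ Finset.univ.filter (fun i : Fin k => (i : ℕ) < h), x i) *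
          (∑ i ∈ Finset.univ.filter (fun i : Fin k => (i : ℕ) < h), x i) = 0} : ℚ) =
      (q : ℚ) ^ ((k : ℤ) - h - 1) *
        ((q : ℚ) ^ (h + 1) - ((q : ℚ) - 1) ^ (h + 1) + (-1) ^ h * ((q : ℚ) - 1)) - 1 := by
  classical
  subst hq
  have hq2 : 2 ≤ Fintype.card F := Fintype.one_lt_card
  have hq0 : ((Fintype.card F : ℕ) : ℚ) ≠ 0 := by positivity
  -- rewrite the filter as a map of castLE
  have hfilter : (Finset.univ.filter (fun i : Fin k => (i : ℕ) < h))
      = Finset.map ⟨Fin.castLE hk, Fin.castLE_injective hk⟩ Finset.univ := by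
    ext i
    simp only [mem_filter, mem_univ, true_and, Finset.mem_map, Function.Embedding.coeFn_mk]
    constructor
    · intro hi; exact ⟨⟨(i : ℕ), hi⟩, by apply Fin.ext; simp⟩
    · rintro ⟨j, rfl⟩; simpa using j.2
  have hprod : ∀ x : Fin k → F,
      (∏ i ∈ Finset.univ.filter (fun i : Fin k => (i : ℕ) < h), x i)
        = ∏ j : Fin h, x (Fin.castLE hk j) := by
    intro x; rw [hfilter, Finset.prod_map]; rfl
  have hsum : ∀ x : Fin k → F,
      (∑ i ∈ Finset.univ.filter (fun i : Fin k => (i : ℕ) < h), x i)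
        = ∑ j : Fin h, x (Fin.castLE hk j) := by
    intro x; rw [hfilter, Finset.sum_map]; rfl
  have hS : {x : Fin k → F | x ≠ 0 ∧
        (∏ i ∈ Finset.univ.filter (fun i : Fin k => (i : ℕ) < h), x i) *
          (∑ i ∈ Finset.univ.filter (fun i : Fin k => (i : ℕ) < h), x i) = 0}
      = {x : Fin k → F | x ≠ 0 ∧ Apred F hk x} := by
    ext x
    rw [Set.mem_setOf_eq, Set.mem_setOf_eq, hprod x, hsum x]
    rfl
  rw [hS]
  have hA0 : Apred F hk 0 := by
    have hz : (∏ j : Fin h, (0 : Fin k → F) (Fin.castLE hk j)) = 0 :=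
      Finset.prod_eq_zero (Finset.mem_univ (⟨0, lt_of_lt_of_le two_pos hh⟩ : Fin h)) rfl
    rw [Apred, hz, zero_mul]
  -- a + 1 = b
  have hab : Nat.card {x : Fin k → F // x ≠ 0 ∧ Apred F hk x} + 1
      = Nat.card {x : Fin k → F // Apred F hk x} := by
    rw [Nat.card_eq_fintype_card, Nat.card_eq_fintype_card,
      Fintype.card_subtype, Fintype.card_subtype]
    have h0mem : (0 : Fin k → F) ∈ Finset.univ.filter (fun x => Apred F hk x) := by
      simp only [Finset.mem_filter, Finset.mem_univ, true_and]
      exact hA0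
    have herase : Finset.univ.filter (fun x : Fin k → F => x ≠ 0 ∧ Apred F hk x)
        = (Finset.univ.filter (fun x => Apred F hk x)).erase 0 := by
      ext x
      simp only [Finset.mem_filter, Finset.mem_univ, true_and, Finset.mem_erase]
    rw [herase, Finset.card_erase_of_mem h0mem]
    have : 1 ≤ (Finset.univ.filter (fun x : Fin k → F => Apred F hk x)).card :=
      Finset.card_pos.mpr ⟨0, h0mem⟩
    omega
  -- b + u = q ^ k
  have hbu : Nat.card {x : Fin k → F // Apred F hk x}
      + Nat.card {x : Fin k → F // ¬ Apred F hk x} = Fintype.card F ^ k := by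
    rw [Nat.card_eq_fintype_card, Nat.card_eq_fintype_card,
      Fintype.card_subtype, Fintype.card_subtype]
    have := Finset.card_filter_add_card_filter_not
      (s := (Finset.univ : Finset (Fin k → F))) (p := fun x => Apred F hk x)
    rw [Finset.card_univ, Fintype.card_fun, Fintype.card_fin] at this
    exact this
  -- u = w * q ^ (k - h)
  have hu : Nat.card {x : Fin k → F // ¬ Apred F hk x}
      = Nat.card {y : Fin h → F // (∀ i, y i ≠ 0) ∧ ∑ i, y i ≠ 0}
        * Fintype.card F ^ (k - h) := by
    have hiff : ∀ x : Fin k → F, (¬ Apred F hk x) ↔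
        ((fun y : Fin h → F => (∀ i, y i ≠ 0) ∧ ∑ i, y i ≠ 0)
          (fun j => x (Fin.castLE hk j))) := by
      intro x
      constructor
      · intro hx
        have hx' : (∏ j : Fin h, x (Fin.castLE hk j)) *
            (∑ j : Fin h, x (Fin.castLE hk j)) ≠ 0 := hx
        rcases mul_ne_zero_iff.mp hx' with ⟨h1, h2⟩
        exact ⟨fun i => Finset.prod_ne_zero_iff.mp h1 i (Finset.mem_univ i), h2⟩
      · rintro ⟨h1, h2⟩
        exact mul_ne_zero (Finset.prod_ne_zero_iff.mpr (fun i _ => h1 i)) h2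
    rw [Nat.card_congr (Equiv.subtypeEquivRight hiff)]
    exact card_comp (F := F) hk (fun y : Fin h → F => (∀ i, y i ≠ 0) ∧ ∑ i, y i ≠ 0)
  -- z + w = (q - 1) ^ h
  have hzw := Z_add_U (F := F) h
  have hcast : ((Fintype.card F - 1 : ℕ) : ℚ) = ((Fintype.card F : ℕ) : ℚ) - 1 := by
    rw [Nat.cast_sub (le_trans one_le_two hq2)]; norm_num
  have hz : (Zc F h : ℚ) = ((((Fintype.card F : ℕ) : ℚ) - 1) ^ h
      + (-1) ^ h * (((Fintype.card F : ℕ) : ℚ) - 1)) / ((Fintype.card F : ℕ) : ℚ) :=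
    Z_formula h (le_trans one_le_two hh)
  -- cast everything to ℚ
  have hwQ : ((Nat.card {y : Fin h → F // (∀ i, y i ≠ 0) ∧ ∑ i, y i ≠ 0} : ℕ) : ℚ)
      = ((Fintype.card F : ℚ) - 1) ^ h - (Zc F h : ℚ) := by
    have h' := congrArg (fun m : ℕ => (m : ℚ)) hzw
    push_cast at h'
    rw [hcast] at h'
    linarith
  have haQ : ((Nat.card {x : Fin k → F // x ≠ 0 ∧ Apred F hk x} : ℕ) : ℚ)
      = (Fintype.card F : ℚ) ^ k - (((Fintype.card F : ℚ) - 1) ^ h - (Zc F h : ℚ))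
        * (Fintype.card F : ℚ) ^ (k - h) - 1 := by
    have h1 := congrArg (fun m : ℕ => (m : ℚ)) hab
    have h2 := congrArg (fun m : ℕ => (m : ℚ)) hbu
    have h3 := congrArg (fun m : ℕ => (m : ℚ)) hu
    push_cast at h1 h2 h3
    rw [hwQ] at h3
    linarith
  have hncard : Set.ncard {x : Fin k → F | x ≠ 0 ∧ Apred F hk x}
      = Nat.card {x : Fin k → F // x ≠ 0 ∧ Apred F hk x} := rfl
  rw [hncard, haQ, hz]
  have hzpow : ((k : ℤ) - h - 1) = ((k - h : ℕ) : ℤ) - 1 := by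
    push_cast [Nat.cast_sub hk]; ring
  rw [hzpow, zpow_sub₀ hq0, zpow_natCast, zpow_one]
  have hQk : ((Fintype.card F : ℕ) : ℚ) ^ k
      = ((Fintype.card F : ℕ) : ℚ) ^ (k - h) * ((Fintype.card F : ℕ) : ℚ) ^ h := by
    rw [← pow_add, Nat.sub_add_cancel hk]
  rw [hQk]
  field_simp
  ring
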